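/- (Mosco liminf inequality.) Let (α_n) ⊂ (0,1) be a sequence with α_n → 0, and let (φ_n) ⊂ L²(Q) converge weakly in L²(Q) to some φ ∈ L²(Q). Then liminf_{n→∞} E_{sg,α_n}(φ_n) ≥ I_K(φ), where the liminf is taken in [0,∞]. -/

import Mathlib

open MeasureTheory Filter Set Classical
open scoped ENNReal

/-- The logarithmic potential `W_{sg,α}(s) = α((1+α+s)log(1+α+s) + (1+α−s)log(1+α−s))`.
(In Mathlib, `Real.log 0 = 0`, so the convention `0·log 0 = 0` holds automatically.) -/
noncomputable def Wsg (α s : ℝ) : ℝ :=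
  α * ((1 + α + s) * Real.log (1 + α + s) + (1 + α - s) * Real.log (1 + α - s))

/-- The Lebesgue measure restricted to `Q = Ω × (0,T')`. -/
noncomputable def Qmeasure (Ω : Set (EuclideanSpace ℝ (Fin 3))) (T' : ℝ) :
    Measure (EuclideanSpace ℝ (Fin 3) × ℝ) :=
  volume.restrict (Ω ×ˢ Set.Ioo 0 T')

/-- The functional `E_{sg,α} : L²(Q) → [0,∞]`, equal to `∫_Q W_{sg,α}(φ)` if
`|φ| ≤ 1+α` a.e. in `Q`, and `+∞` otherwise. -/
noncomputable def Esg {X : Type*} [MeasurableSpace X] (μ : Measure X) (α : ℝ)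
    (φ : X → ℝ) : ℝ≥0∞ :=
  if ∀ᵐ x ∂μ, |φ x| ≤ 1 + α then ∫⁻ x, ENNReal.ofReal (Wsg α (φ x)) ∂μ else ⊤

/-- The indicator functional `I_K` of `K = {φ ∈ L²(Q) : |φ| ≤ 1 a.e.}`. -/
noncomputable def IK {X : Type*} [MeasurableSpace X] (μ : Measure X)
    (φ : X → ℝ) : ℝ≥0∞ :=
  if ∀ᵐ x ∂μ, |φ x| ≤ 1 then 0 else ⊤

/-- **Mosco liminf inequality.** If `α_n ∈ (0,1)`, `α_n → 0`, and
`φ_n ⇀ φ` weakly in `L²(Q)`, then `liminf_n E_{sg,α_n}(φ_n) ≥ I_K(φ)`. -/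
theorem stmt_2
    (T' : ℝ) (hT' : 0 < T')
    (Ω : Set (EuclideanSpace ℝ (Fin 3)))
    (hΩo : IsOpen Ω) (hΩc : IsConnected Ω) (hΩb : Bornology.IsBounded Ω)
    (α : ℕ → ℝ) (hα : ∀ n, α n ∈ Set.Ioo (0 : ℝ) 1)
    (hα0 : Tendsto α atTop (nhds 0))
    (φn : ℕ → EuclideanSpace ℝ (Fin 3) × ℝ → ℝ)
    (φ : EuclideanSpace ℝ (Fin 3) × ℝ → ℝ)
    (hφn : ∀ n, MemLp (φn n) 2 (Qmeasure Ω T'))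
    (hφ : MemLp φ 2 (Qmeasure Ω T'))
    (hweak : ∀ g : EuclideanSpace ℝ (Fin 3) × ℝ → ℝ, MemLp g 2 (Qmeasure Ω T') →
      Tendsto (fun n => ∫ x, φn n x * g x ∂(Qmeasure Ω T')) atTop
        (nhds (∫ x, φ x * g x ∂(Qmeasure Ω T')))) :
    IK (Qmeasure Ω T') φ ≤ atTop.liminf (fun n => Esg (Qmeasure Ω T') (α n) (φn n)) := by
  set μ := Qmeasure Ω T' with hμdef
  have hfin : IsFiniteMeasure μ := by
    constructor
    rw [hμdef, Qmeasure, Measure.restrict_apply_univ]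
    exact (hΩb.prod (Metric.isBounded_Ioo 0 T')).measure_lt_top
  rw [IK]
  split_ifs with h1
  · exact zero_le
  by_contra hcon
  -- frequently the constraint holds
  have hfreq : ∃ᶠ n in atTop, ∀ᵐ x ∂μ, |φn n x| ≤ 1 + α n := by
    by_contra hf
    rw [not_frequently] at hf
    exact hcon (le_liminf_of_le (by isBoundedDefault)
      (hf.mono fun n hn => by rw [Esg, if_neg hn]))
  obtain ⟨ψ, hψm, hψeq⟩ := hφ.aestronglyMeasurable
  have hψmeas : Measurable ψ := hψm.measurable
  have h1' : ¬ ∀ᵐ x ∂μ, |ψ x| ≤ 1 := by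
    intro h
    exact h1 (h.mp (hψeq.mono fun x hx h2 => by rw [hx]; exact h2))
  have hexk : ∃ k : ℕ, μ {x | 1 + 1/((k:ℝ)+1) ≤ |ψ x|} ≠ 0 := by
    by_contra hk
    push_neg at hk
    apply h1'
    have hU : {x | 1 < |ψ x|} ⊆ ⋃ n : ℕ, {x | 1 + 1/((n:ℝ)+1) ≤ |ψ x|} := by
      intro x hx
      obtain ⟨n, hn⟩ := exists_nat_one_div_lt (show (0:ℝ) < |ψ x| - 1 from sub_pos.mpr hx)
      exact mem_iUnion.mpr ⟨n, by simp only [mem_setOf_eq]; linarith⟩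
    have hz : μ {x | 1 < |ψ x|} = 0 :=
      measure_mono_null hU (measure_iUnion_null fun n => hk n)
    rw [ae_iff]
    simpa [not_le] using hz
  obtain ⟨k, hk⟩ := hexk
  set δ : ℝ := 1/((k:ℝ)+1) with hδdef
  have hδpos : 0 < δ := by positivity
  set A := {x | 1 + δ ≤ |ψ x|} with hAdef
  have hAm : MeasurableSet A := measurableSet_le measurable_const hψmeas.abs
  set M := (μ A).toReal with hMdef
  have hMpos : 0 < M := ENNReal.toReal_pos hk (measure_ne_top μ A)
  set g := A.indicator (fun x => if 0 ≤ ψ x then (1:ℝ) else -1) with hgdef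
  have hgm : Measurable g :=
    (Measurable.ite (measurableSet_le measurable_const hψmeas) measurable_const
      measurable_const).indicator hAm
  have hgb : ∀ x, |g x| ≤ 1 := by
    intro x
    rw [hgdef]
    by_cases hx : x ∈ A
    · rw [indicator_of_mem hx]
      split_ifs <;> norm_num
    · rw [indicator_of_notMem hx]; norm_num
  have hgL2 : MemLp g 2 μ :=
    MemLp.of_bound hgm.aestronglyMeasurable 1
      (Eventually.of_forall fun x => by rw [Real.norm_eq_abs]; exact hgb x)
  have hpg : ∀ x, ψ x * g x = A.indicator (fun y => |ψ y|) x := by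
    intro x
    by_cases hx : x ∈ A
    · rw [hgdef, indicator_of_mem hx, indicator_of_mem hx]
      split_ifs with h0
      · rw [mul_one, abs_of_nonneg h0]
      · rw [mul_neg_one, abs_of_neg (lt_of_not_ge h0)]
    · rw [hgdef, indicator_of_notMem hx, indicator_of_notMem hx, mul_zero]
  have hψint : Integrable ψ μ := (hφ.integrable one_le_two).congr hψeq
  have hlow : (1 + δ) * M ≤ ∫ x, φ x * g x ∂μ := by
    have heq : ∫ x, φ x * g x ∂μ = ∫ x in A, |ψ x| ∂μ := by
      rw [integral_congr_ae (hψeq.mono fun x hx => by rw [hx])]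
      simp_rw [hpg]
      rw [integral_indicator hAm]
    rw [heq]
    have h2 : ∫ x in A, (1 + δ) ∂μ ≤ ∫ x in A, |ψ x| ∂μ :=
      setIntegral_mono_on (integrableOn_const (measure_ne_top μ A))
        hψint.abs.integrableOn hAm (fun x hx => hx)
    calc (1 + δ) * M = ∫ _ in A, (1 + δ) ∂μ := by
          rw [setIntegral_const, smul_eq_mul, mul_comm]; rfl
      _ ≤ _ := h2
  have hup : ∀ n, (∀ᵐ x ∂μ, |φn n x| ≤ 1 + α n) →
      ∫ x, φn n x * g x ∂μ ≤ (1 + α n) * M := by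
    intro n hn
    have hint : Integrable (fun x => φn n x * g x) μ := by
      have := ((hφn n).integrable one_le_two).bdd_mul hgm.aestronglyMeasurable
        (Eventually.of_forall fun x => by rw [Real.norm_eq_abs]; exact hgb x)
      simpa [mul_comm] using this
    have hindint : Integrable (A.indicator fun _ => 1 + α n) μ :=
      (integrable_const _).indicator hAm
    have hle : ∀ᵐ x ∂μ, φn n x * g x ≤ A.indicator (fun _ => 1 + α n) x := by
      filter_upwards [hn] with x hx
      by_cases hxa : x ∈ A
      · rw [indicator_of_mem hxa]
        calc φn n x * g x ≤ |φn n x * g x| := le_abs_self _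
          _ = |φn n x| * |g x| := abs_mul _ _
          _ ≤ (1 + α n) * 1 :=
              mul_le_mul hx (hgb x) (abs_nonneg _) (by linarith [(hα n).1])
          _ = 1 + α n := mul_one _
      · have hg0 : g x = 0 := indicator_of_notMem hxa _
        rw [indicator_of_notMem hxa, hg0, mul_zero]
    calc ∫ x, φn n x * g x ∂μ ≤ ∫ x, A.indicator (fun _ => 1 + α n) x ∂μ :=
          integral_mono_ae hint hindint hle
      _ = (1 + α n) * M := by
          rw [integral_indicator hAm, setIntegral_const, smul_eq_mul, mul_comm]; rfl
  have hlim := hweak g hgL2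
  set L := ∫ x, φ x * g x ∂μ with hLdef
  have hev1 : ∀ᶠ n in atTop, L - δ * M / 4 < ∫ x, φn n x * g x ∂μ := by
    have : ∀ᶠ n in atTop, (∫ x, φn n x * g x ∂μ) ∈ Ioi (L - δ * M / 4) :=
      hlim (Ioi_mem_nhds (by nlinarith))
    exact this.mono fun n hn => mem_Ioi.mp hn
  have hev2 : ∀ᶠ n in atTop, α n ∈ Iio (δ / 2) :=
    hα0 (Iio_mem_nhds (by positivity))
  obtain ⟨n, hn1, hn2, hn3⟩ := (hfreq.and_eventually (hev1.and hev2)).exists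
  have hub := hup n hn1
  have hn3' : α n < δ / 2 := hn3
  nlinarith [hlow]
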